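/- Every symplectic self-duality of a finite abelian group is standard: if L is a finite abelian group and ∇ : L → Hom(L, ℚ/ℤ) is an isomorphism with ∇(x)(x)=0 for all x, then there exists a finite abelian group A and an isomorphism φ : A × dual(A) → L with ∇(φ(x,χ))(φ(y,λ)) = χ(y) − λ(x). -/

import Mathlib

/-- ℚ/ℤ, the dualizing object for finite abelian groups. -/
abbrev QZ : Type := AddCircle (1 : ℚ)

/-- `(L, ∇)` is isomorphic, as a group with symplectic self-duality, to
`A × dual A` with the standard symplectic self-duality
`∇⁰(x,χ)(y,λ) = χ(y) − λ(x)`. -/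
def StandardPair (A L : Type) [AddCommGroup A] [AddCommGroup L]
    (nabla : L ≃+ (L →+ QZ)) : Prop :=
  ∃ φ : (A × (A →+ QZ)) ≃+ L,
    ∀ a b : A × (A →+ QZ), nabla (φ a) (φ b) = a.2 b.1 - b.2 a.1


noncomputable def uu (e : ℕ) : QZ := ((e : ℚ)⁻¹ : ℚ)

lemma zsmul_coe (q : ℚ) (n : ℤ) : (n • q : ℚ) = n • (q : QZ) := by simp

lemma zsmul_uu_eq_zero_iff {e : ℕ} (he : 0 < e) (n : ℤ) : n • uu e = 0 ↔ (e : ℤ) ∣ n := by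
  have he' : (e : ℚ) ≠ 0 := by positivity
  rw [uu, ← zsmul_coe, AddCircle.coe_eq_zero_iff]
  constructor
  · rintro ⟨m, hm⟩
    refine ⟨m, ?_⟩
    rw [zsmul_eq_mul, zsmul_eq_mul, mul_one] at hm
    have h2 : ((n : ℤ) : ℚ) = (e : ℚ) * m := by
      rw [hm, mul_left_comm, mul_inv_cancel₀ he', mul_one]
    exact_mod_cast h2
  · rintro ⟨m, rfl⟩
    refine ⟨m, ?_⟩
    simp only [zsmul_eq_mul, smul_eq_mul, mul_one]
    field_simp
    push_cast; ring

lemma torsion {e : ℕ} (he : 0 < e) (q : QZ) (h : e • q = 0) : ∃ n : ℤ, q = n • uu e := by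
  induction q using QuotientAddGroup.induction_on with
  | H r =>
    have : ((e • r : ℚ) : QZ) = 0 := by
      rw [← h]; simp
    rw [AddCircle.coe_eq_zero_iff] at this
    obtain ⟨m, hm⟩ := this
    refine ⟨m, ?_⟩
    have he' : (e : ℚ) ≠ 0 := by positivity
    rw [uu, ← zsmul_coe]
    congr 1
    simp only [smul_eq_mul, mul_one, nsmul_eq_mul, zsmul_eq_mul] at hm ⊢
    field_simp
    linarith [hm]

lemma zmodHom_ext {e : ℕ} (he : 0 < e) {M : Type*} [AddCommMonoid M] (f g : ZMod e →+ M)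
    (h : f 1 = g 1) : f = g := by
  ext a
  haveI : NeZero e := ⟨he.ne'⟩
  have ha : a = a.val • (1 : ZMod e) := by
    simp [nsmul_eq_mul, ZMod.natCast_val, ZMod.cast_id]
  rw [ha, map_nsmul, map_nsmul, h]

noncomputable def delta (e : ℕ) (he : 0 < e) : ZMod e →+ QZ :=
  ZMod.lift e ⟨zmultiplesHom QZ (uu e), by
    show (e : ℤ) • uu e = 0
    exact (zsmul_uu_eq_zero_iff he e).2 dvd_rfl⟩

lemma delta_intCast {e : ℕ} (he : 0 < e) (n : ℤ) : delta e he (n : ZMod e) = n • uu e :=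
  ZMod.lift_coe e _ n

lemma delta_one {e : ℕ} (he : 0 < e) : delta e he 1 = uu e := by
  have := delta_intCast he 1
  simpa using this

lemma delta_injective {e : ℕ} (he : 0 < e) : Function.Injective ⇑(delta e he) := by
  rw [← AddMonoidHom.ker_eq_bot_iff, eq_bot_iff]
  intro a ha
  obtain ⟨n, rfl⟩ := ZMod.intCast_surjective a
  rw [AddMonoidHom.mem_ker, delta_intCast he, zsmul_uu_eq_zero_iff he] at ha
  simpa [ZMod.intCast_zmod_eq_zero_iff_dvd] using ha

lemma delta_eq_zero_iff {e : ℕ} (he : 0 < e) (a : ZMod e) : delta e he a = 0 ↔ a = 0 := by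
  constructor
  · intro h; exact delta_injective he (by simpa using h)
  · rintro rfl; simp

/-- The self-duality of `ZMod e`. -/
noncomputable def zmodDualHom (e : ℕ) (he : 0 < e) : ZMod e →+ (ZMod e →+ QZ) where
  toFun a := (delta e he).comp (AddMonoidHom.mulLeft a)
  map_zero' := by ext b; simp
  map_add' := by intro a b; ext c; simp [add_mul]

/-- The self-duality of `ZMod e`. -/
noncomputable def zmodDual (e : ℕ) (he : 0 < e) : ZMod e ≃+ (ZMod e →+ QZ) := by
  refine AddEquiv.ofBijective (zmodDualHom e he) ⟨?_, ?_⟩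
  · intro a b hab
    have := congrArg (fun f => f 1) hab
    simp [zmodDualHom] at this
    exact delta_injective he this
  · intro f
    have h1 : e • f 1 = 0 := by
      rw [← map_nsmul]
      simp
    obtain ⟨n, hn⟩ := torsion he (f 1) h1
    refine ⟨(n : ZMod e), ?_⟩
    refine (zmodHom_ext he _ _ ?_).symm
    simp [zmodDualHom, hn, delta_intCast he]

/-- Dual of a product splits. -/
def dualProd (M N : Type*) [AddCommMonoid M] [AddCommMonoid N] :
    ((M × N) →+ QZ) ≃+ ((M →+ QZ) × (N →+ QZ)) where
  toFun f := (f.comp (AddMonoidHom.inl M N), f.comp (AddMonoidHom.inr M N))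
  invFun p := p.1.comp (AddMonoidHom.fst M N) + p.2.comp (AddMonoidHom.snd M N)
  left_inv f := by
    ext p
    simp
    rw [← map_add]
    simp
  right_inv p := by
    ext x <;> simp
  map_add' f g := by
    ext x <;> simp

instance : Subsingleton (PUnit →+ QZ) :=
  ⟨fun f g => by ext x; have : x = 0 := Subsingleton.elim _ _; subst this; rw [map_zero, map_zero]⟩

lemma exists_extension {L : Type} [AddCommGroup L] (K : AddSubgroup L) (f : ↥K →+ QZ) :
    ∃ F : L →+ QZ, ∀ k : ↥K, F k = f k := by
  obtain ⟨F, hF⟩ := CharacterModule.dual_surjective_of_injective (R := ℤ)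
    (K.toIntSubmodule.subtype) (Submodule.injective_subtype _) f
  exact ⟨F, fun k => congrArg (fun g => g k) hF⟩

lemma glue {L L₁ L₂ A₁ A₂ : Type} [AddCommGroup L] [AddCommGroup L₁] [AddCommGroup L₂]
    [AddCommGroup A₁] [AddCommGroup A₂]
    (nabla : L ≃+ (L →+ QZ))
    (B₁ : L₁ → L₁ → QZ) (B₂ : L₂ → L₂ → QZ)
    (ψ : (L₁ × L₂) ≃+ L)
    (hψ : ∀ p q : L₁ × L₂, nabla (ψ p) (ψ q) = B₁ p.1 q.1 + B₂ p.2 q.2)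
    (φ₁ : (A₁ × (A₁ →+ QZ)) ≃+ L₁)
    (h₁ : ∀ a b, B₁ (φ₁ a) (φ₁ b) = a.2 b.1 - b.2 a.1)
    (φ₂ : (A₂ × (A₂ →+ QZ)) ≃+ L₂)
    (h₂ : ∀ a b, B₂ (φ₂ a) (φ₂ b) = a.2 b.1 - b.2 a.1) :
    StandardPair (A₁ × A₂) L nabla := by
  refine ⟨(((AddEquiv.refl (A₁ × A₂)).prodCongr (dualProd A₁ A₂)).trans
      ((AddEquiv.prodProdProdComm A₁ A₂ (A₁ →+ QZ) (A₂ →+ QZ)).trans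
        ((φ₁.prodCongr φ₂).trans ψ))), ?_⟩
  rintro ⟨⟨a₁, a₂⟩, χ⟩ ⟨⟨b₁, b₂⟩, lam⟩
  show nabla (ψ (φ₁ (a₁, χ.comp (AddMonoidHom.inl A₁ A₂)), φ₂ (a₂, χ.comp (AddMonoidHom.inr A₁ A₂))))
      (ψ (φ₁ (b₁, lam.comp (AddMonoidHom.inl A₁ A₂)), φ₂ (b₂, lam.comp (AddMonoidHom.inr A₁ A₂)))) = _
  rw [hψ, h₁, h₂]
  simp only [AddMonoidHom.coe_comp, Function.comp_apply, AddMonoidHom.inl_apply,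
    AddMonoidHom.inr_apply]
  have hx : χ (b₁, 0) + χ (0, b₂) = χ (b₁, b₂) := by rw [← map_add]; simp
  have hy : lam (a₁, 0) + lam (0, a₂) = lam (a₁, a₂) := by rw [← map_add]; simp
  rw [← hx, ← hy]
  abel


lemma zmodDual_apply_apply {e : ℕ} (he : 0 < e) (a b : ZMod e) :
    zmodDual e he a b = delta e he (a * b) := rfl


lemma hom_zsmul_apply {M N : Type*} [AddCommMonoid M] [AddCommGroup N] (m : ℤ) (f : M →+ N)
    (a : M) : (m • f) a = m • f a := rfl

-- base case
lemma base {L : Type} [AddCommGroup L] [Subsingleton L] (nabla : L ≃+ (L →+ QZ)) :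
    StandardPair PUnit L nabla := by
  have hbij : Function.Bijective (0 : (PUnit × (PUnit →+ QZ)) →+ L) :=
    ⟨fun a b _ => Subsingleton.elim a b, fun x => ⟨0, Subsingleton.elim _ _⟩⟩
  refine ⟨AddEquiv.ofBijective _ hbij, ?_⟩
  intro a b
  have h2 : a.2 = 0 := Subsingleton.elim _ _
  have h2' : b.2 = 0 := Subsingleton.elim _ _
  rw [h2, h2']
  rw [show (AddEquiv.ofBijective _ hbij) a = (0 : L) from Subsingleton.elim _ _, map_zero]
  simp

lemma skew {L : Type} [AddCommGroup L] (nabla : L ≃+ (L →+ QZ))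
    (hsymp : ∀ x : L, nabla x x = 0) (u v : L) : nabla u v = - nabla v u := by
  have h := hsymp (u + v)
  have : nabla (u+v) (u+v) = nabla u u + nabla u v + (nabla v u + nabla v v) := by
    rw [map_add]
    simp [map_add]
    abel
  rw [h, hsymp, hsymp] at this
  simp at this
  exact eq_neg_of_add_eq_zero_left this.symm

set_option maxHeartbeats 1600000 in
lemma main : ∀ (n : ℕ) (L : Type) (_ : AddCommGroup L) (_ : Fintype L)
    (nabla : L ≃+ (L →+ QZ)), (∀ x : L, nabla x x = 0) → Fintype.card L ≤ n →
    ∃ (A : Type) (iA : AddCommGroup A) (_ : Finite A), @StandardPair A L iA _ nabla := by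
  intro n
  induction n with
  | zero => intro L _ _ nabla _ hcard; exact absurd hcard (by simp [Fintype.card_pos.ne'])
  | succ n ih =>
    intro L _ _ nabla hsymp hcard
    by_cases hsub : Subsingleton L
    · exact ⟨PUnit, inferInstance, inferInstance, base nabla⟩
    haveI : Nontrivial L := not_subsingleton_iff_nontrivial.mp hsub
    -- the exponent
    set e := AddMonoid.exponent L with he_def
    have hee : AddMonoid.ExponentExists L := AddMonoid.ExponentExists.of_finite
    have he : 0 < e := hee.exponent_pos
    have he1 : e ≠ 1 := by
      intro h
      exact hsub (AddMonoid.exp_eq_one_iff.mp h)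
    have he2 : 2 ≤ e := by omega
    haveI : NeZero e := ⟨he.ne'⟩
    obtain ⟨x, hx⟩ := AddMonoid.exists_addOrderOf_eq_exponent hee
    rw [← he_def] at hx
    have hex : (e : ℤ) • x = 0 := by
      rw [natCast_zsmul, ← hx, addOrderOf_nsmul_eq_zero]
    -- e-torsion of all values
    have htor : ∀ u v : L, e • (nabla u v) = 0 := by
      intro u v
      rw [← map_nsmul, AddMonoid.exponent_nsmul_eq_zero, map_zero]
    -- the auxiliary homomorphism c with delta ∘ c = nabla x
    set dd := delta e he with hdd
    have hmem : ∀ z : L, nabla x z ∈ dd.range := by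
      intro z
      obtain ⟨m, hm⟩ := torsion he _ (htor x z)
      exact ⟨(m : ZMod e), by rw [hdd, delta_intCast he, hm]⟩
    set c : L →+ ZMod e :=
      ((AddMonoidHom.ofInjective (delta_injective he)).symm.toAddMonoidHom).comp
        ((nabla x).codRestrict dd.range hmem) with hc
    have hdc : ∀ z : L, dd (c z) = nabla x z := by
      intro z
      rw [hc]
      exact AddMonoidHom.apply_ofInjective_symm (delta_injective he) _
    -- c is surjective
    have hcsurj : Function.Surjective c := by
      haveI : Fintype ↥c.range := Fintype.ofFinite _
      have hkill : ∀ z : L, (Fintype.card ↥c.range) • c z = 0 := by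
        intro z
        have : (Fintype.card ↥c.range) • (⟨c z, ⟨z, rfl⟩⟩ : ↥c.range) = 0 :=
          card_nsmul_eq_zero
        simpa using congrArg (Subtype.val) this
      have hnkill : (Fintype.card ↥c.range) • (nabla x) = 0 := by
        ext z
        have : ((Fintype.card ↥c.range) • (nabla x)) z
            = dd ((Fintype.card ↥c.range) • c z) := by
          rw [map_nsmul, hdc]
          simp
        rw [this, hkill, map_zero]
        rfl
      have hord : addOrderOf (nabla x) = e := by
        rw [← hx]
        exact addOrderOf_injective nabla.toAddMonoidHom nabla.injective x
      have hdvd1 : e ∣ Fintype.card ↥c.range := by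
        have := addOrderOf_dvd_of_nsmul_eq_zero hnkill
        rwa [hord] at this
      have hdvd2 : Fintype.card ↥c.range ∣ e := by
        have := AddSubgroup.card_addSubgroup_dvd_card c.range
        simpa [Nat.card_eq_fintype_card, ZMod.card] using this
      have hcardeq : Fintype.card ↥c.range = Fintype.card (ZMod e) := by
        rw [ZMod.card]
        exact Nat.dvd_antisymm hdvd2 hdvd1
      have : c.range = ⊤ := by
        apply AddSubgroup.eq_top_of_card_eq
        simpa using hcardeq
      exact AddMonoidHom.range_eq_top.mp this
    obtain ⟨y, hy⟩ := hcsurj 1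
    have hxy : nabla x y = uu e := by rw [← hdc, hy, hdd, delta_one he]
    have hey : (e : ℤ) • y = 0 := by
      rw [natCast_zsmul, ← AddMonoid.exponent_nsmul_eq_zero y]
    -- the homomorphisms X Y : ZMod e →+ L
    set X : ZMod e →+ L := ZMod.lift e ⟨zmultiplesHom L x, hex⟩ with hX
    set Y : ZMod e →+ L := ZMod.lift e ⟨zmultiplesHom L y, hey⟩ with hY
    have hXcast : ∀ m : ℤ, X ((m : ℤ) : ZMod e) = m • x := fun m => ZMod.lift_coe e _ m
    have hYcast : ∀ m : ℤ, Y ((m : ℤ) : ZMod e) = m • y := fun m => ZMod.lift_coe e _ m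
    have hX1 : X 1 = x := by simpa using hXcast 1
    have hY1 : Y 1 = y := by simpa using hYcast 1
    -- pairing computations
    have hrep : ∀ a : ZMod e, ∃ m : ℤ, a = ((m : ℤ) : ZMod e) := fun a =>
      ⟨(a.val : ℤ), by simp [ZMod.natCast_val, ZMod.cast_id]⟩
    have pairXY : ∀ a d : ZMod e, nabla (X a) (Y d) = dd (a * d) := by
      intro a d
      obtain ⟨m, rfl⟩ := hrep a
      obtain ⟨l, rfl⟩ := hrep d
      rw [hXcast, hYcast, map_zsmul]
      have : ((m : ZMod e)) * ((l : ZMod e)) = (((m * l : ℤ)) : ZMod e) := by push_cast; ring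
      rw [this, hdd, delta_intCast he]
      simp only [hom_zsmul_apply, map_zsmul, hxy]
      rw [mul_comm, mul_zsmul]
    have pairXX : ∀ a c' : ZMod e, nabla (X a) (X c') = 0 := by
      intro a d
      obtain ⟨m, rfl⟩ := hrep a
      obtain ⟨l, rfl⟩ := hrep d
      rw [hXcast, hXcast, map_zsmul]
      simp only [hom_zsmul_apply, map_zsmul, hsymp x]
      simp
    have pairYY : ∀ a d : ZMod e, nabla (Y a) (Y d) = 0 := by
      intro a d
      obtain ⟨m, rfl⟩ := hrep a
      obtain ⟨l, rfl⟩ := hrep d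
      rw [hYcast, hYcast, map_zsmul]
      simp only [hom_zsmul_apply, map_zsmul, hsymp y]
      simp
    have pairYX : ∀ b c' : ZMod e, nabla (Y b) (X c') = - dd (b * c') := by
      intro b c'
      rw [skew nabla hsymp, pairXY, mul_comm]
    -- the orthogonal complement K
    set K : AddSubgroup L := (nabla x).ker ⊓ (nabla y).ker with hK
    have hKmem : ∀ z : L, z ∈ K ↔ nabla x z = 0 ∧ nabla y z = 0 := by
      intro z
      simp [hK, AddMonoidHom.mem_ker]
    have pairXK : ∀ (a : ZMod e) (k : L), k ∈ K → nabla (X a) k = 0 := by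
      intro a k hk
      obtain ⟨m, rfl⟩ := hrep a
      rw [hXcast, map_zsmul, hom_zsmul_apply, ((hKmem k).mp hk).1, smul_zero]
    have pairYK : ∀ (a : ZMod e) (k : L), k ∈ K → nabla (Y a) k = 0 := by
      intro a k hk
      obtain ⟨m, rfl⟩ := hrep a
      rw [hYcast, map_zsmul, hom_zsmul_apply, ((hKmem k).mp hk).2, smul_zero]
    have pairKX : ∀ (a : ZMod e) (k : L), k ∈ K → nabla k (X a) = 0 := by
      intro a k hk
      rw [skew nabla hsymp, pairXK a k hk, neg_zero]
    have pairKY : ∀ (a : ZMod e) (k : L), k ∈ K → nabla k (Y a) = 0 := by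
      intro a k hk
      rw [skew nabla hsymp, pairYK a k hk, neg_zero]
    -- the decomposition homomorphism
    set Φ : ((ZMod e × ZMod e) × ↥K) →+ L :=
      { toFun := fun p => X p.1.1 + Y p.1.2 + (p.2 : L)
        map_zero' := by simp
        map_add' := by
          rintro ⟨⟨a, b⟩, k⟩ ⟨⟨a', b'⟩, k'⟩
          simp only [Prod.fst_add, Prod.snd_add, map_add, AddSubgroup.coe_add]
          abel } with hPhi
    have hPhiApp : ∀ (p : ZMod e × ZMod e) (k : ↥K), Φ (p, k) = X p.1 + Y p.2 + (k : L) :=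
      fun p k => rfl
    -- evaluation of nabla x and nabla y on Φ
    have hevalx : ∀ (p : ZMod e × ZMod e) (k : ↥K), nabla x (Φ (p, k)) = dd p.2 := by
      intro p k
      rw [hPhiApp, map_add, map_add, ← hX1, pairXX, pairXY, pairXK 1 _ k.2]
      simp
    have hevaly : ∀ (p : ZMod e × ZMod e) (k : ↥K), nabla y (Φ (p, k)) = - dd p.1 := by
      intro p k
      rw [hPhiApp, map_add, map_add, ← hY1, pairYX, pairYY, pairYK 1 _ k.2]
      simp
    -- Φ is bijective
    have hPhiInj : Function.Injective Φ := by
      rw [injective_iff_map_eq_zero]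
      rintro ⟨⟨a, b⟩, k⟩ h0
      have hb : dd b = 0 := by
        have := hevalx (a, b) k
        rw [h0, map_zero] at this
        simpa using this.symm
      have ha : dd a = 0 := by
        have := hevaly (a, b) k
        rw [h0, map_zero] at this
        have : -dd a = 0 := by simpa using this.symm
        simpa using this
      rw [hdd, delta_eq_zero_iff he] at ha hb
      subst ha; subst hb
      have hk : (k : L) = 0 := by
        have := hPhiApp (0, 0) k
        rw [h0] at this  -- wrong direction; fix below
        simpa using this.symm
      exact Prod.ext (Prod.ext rfl rfl) (Subtype.ext hk)
    have hPhiSurj : Function.Surjective Φ := by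
      intro z
      obtain ⟨m, hm⟩ := torsion he (nabla x z) (htor x z)
      obtain ⟨l, hl⟩ := torsion he (nabla y z) (htor y z)
      set a : ZMod e := ((-l : ℤ) : ZMod e) with ha
      set b : ZMod e := ((m : ℤ) : ZMod e) with hb
      have hxa : nabla x (X a) = 0 := by rw [← hX1, pairXX]
      have hxb : nabla x (Y b) = dd b := by rw [← hX1, pairXY, one_mul]
      have hya : nabla y (X a) = - dd a := by rw [← hY1, pairYX, one_mul]
      have hyb : nabla y (Y b) = 0 := by rw [← hY1, pairYY]
      have hkmem : z - X a - Y b ∈ K := by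
        rw [hKmem]
        constructor
        · rw [map_sub, map_sub, hxa, hxb, hm, hdd, hb, delta_intCast he]
          abel
        · rw [map_sub, map_sub, hya, hyb, hl, hdd, ha, delta_intCast he]
          simp
      refine ⟨((a, b), ⟨z - X a - Y b, hkmem⟩), ?_⟩
      rw [hPhiApp]
      show X a + Y b + (z - X a - Y b) = z
      abel
    set ΦE : ((ZMod e × ZMod e) × ↥K) ≃+ L := AddEquiv.ofBijective Φ ⟨hPhiInj, hPhiSurj⟩ with hPhiE
    -- cardinality bound for K
    haveI : Fintype ↥K := Fintype.ofFinite _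
    have hcardL : Fintype.card L = e * e * Fintype.card ↥K := by
      have h := Fintype.card_congr ΦE.toEquiv
      rw [← h, Fintype.card_prod, Fintype.card_prod, ZMod.card]
    have hcardK : Fintype.card ↥K ≤ n := by
      have h1 : 0 < Fintype.card ↥K := Fintype.card_pos
      have h4 : 4 ≤ e * e := by nlinarith
      have h5 : 4 * Fintype.card ↥K ≤ e * e * Fintype.card ↥K := Nat.mul_le_mul_right _ h4
      have h6 : 4 * Fintype.card ↥K ≤ Fintype.card L := by rw [hcardL]; exact h5
      omega
    -- the self-duality on K
    have hNKmem : ∀ k : ↥K, True := fun _ => trivial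
    set NK : ↥K →+ (↥K →+ QZ) :=
      { toFun := fun k => ((nabla (k : L)).comp K.subtype)
        map_zero' := by ext k'; simp
        map_add' := by intro k k'; ext k''; simp } with hNK
    have hNKapp : ∀ k k' : ↥K, NK k k' = nabla (k : L) (k' : L) := fun k k' => rfl
    have hNKinj : Function.Injective NK := by
      rw [injective_iff_map_eq_zero]
      intro k h0
      have hzero : nabla (k : L) = 0 := by
        ext z
        obtain ⟨⟨p, k'⟩, rfl⟩ := hPhiSurj z
        rw [hPhiApp, map_add, map_add, pairKX _ _ k.2, pairKY _ _ k.2]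
        have : nabla (k : L) (k' : L) = 0 := by
          rw [← hNKapp, h0]; rfl
        rw [this]
        simp
      have : (k : L) = 0 := by
        apply nabla.injective
        rw [hzero, map_zero]
      exact Subtype.ext this
    have hNKsurj : Function.Surjective NK := by
      intro f
      obtain ⟨F, hF⟩ := exists_extension K f
      obtain ⟨⟨p, k₀⟩, hz⟩ := hPhiSurj (nabla.symm F)
      refine ⟨k₀, ?_⟩
      ext k'
      rw [hNKapp]
      have hFz : nabla (Φ (p, k₀)) = F := by rw [hz]; simp
      have := congrArg (fun g => g (k' : L)) hFz
      rw [hPhiApp, map_add, map_add] at this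
      simp only [AddMonoidHom.add_apply] at this
      rw [pairXK _ _ k'.2, pairYK _ _ k'.2] at this
      simpa [hF k'] using this
    set nablaK : ↥K ≃+ (↥K →+ QZ) := AddEquiv.ofBijective NK ⟨hNKinj, hNKsurj⟩ with hnablaK
    have hsympK : ∀ k : ↥K, nablaK k k = 0 := by
      intro k
      show NK k k = 0
      rw [hNKapp]
      exact hsymp _
    -- apply the induction hypothesis to K
    obtain ⟨A₂, iA₂, finA₂, ⟨φ₂, hφ₂⟩⟩ := ih (↥K) inferInstance inferInstance nablaK hsympK hcardK
    -- the hyperbolic plane part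
    set zd := zmodDual e he with hzd
    set φ₁ : (ZMod e × (ZMod e →+ QZ)) ≃+ (ZMod e × ZMod e) :=
      ((AddEquiv.refl (ZMod e)).prodCongr zd.symm).trans AddEquiv.prodComm with hphi1
    set B₁ : (ZMod e × ZMod e) → (ZMod e × ZMod e) → QZ :=
      fun p q => dd (p.1 * q.2 - p.2 * q.1) with hB1
    set B₂ : ↥K → ↥K → QZ := fun k k' => NK k k' with hB2
    have h₁ : ∀ a b : ZMod e × (ZMod e →+ QZ), B₁ (φ₁ a) (φ₁ b) = a.2 b.1 - b.2 a.1 := by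
      rintro ⟨a, χ⟩ ⟨c, lam⟩
      have hφ₁app : ∀ (a : ZMod e) (χ : ZMod e →+ QZ), φ₁ (a, χ) = (zd.symm χ, a) := fun _ _ => rfl
      have hzdapp : ∀ b' c' : ZMod e, zd b' c' = dd (b' * c') :=
        fun b' c' => zmodDual_apply_apply he b' c'
      rw [hφ₁app, hφ₁app, hB1]
      simp only
      have hχ : χ c = dd (zd.symm χ * c) := by
        conv_lhs => rw [← zd.apply_symm_apply χ]
        rw [hzdapp]
      have hlam : lam a = dd (zd.symm lam * a) := by
        conv_lhs => rw [← zd.apply_symm_apply lam]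
        rw [hzdapp]
      rw [hχ, hlam, ← map_sub]
      congr 1
      ring
    have hψ : ∀ p q : (ZMod e × ZMod e) × ↥K,
        nabla (ΦE p) (ΦE q) = B₁ p.1 q.1 + B₂ p.2 q.2 := by
      rintro ⟨p, k⟩ ⟨q, k'⟩
      show nabla (Φ (p, k)) (Φ (q, k')) = _
      rw [hPhiApp, hPhiApp]
      rw [map_add, map_add]
      simp only [AddMonoidHom.add_apply, map_add]
      rw [pairXX, pairXY, pairXK _ _ k'.2, pairYX, pairYY, pairYK _ _ k'.2,
        pairKX _ _ k.2, pairKY _ _ k.2]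
      simp only [hB1, hB2, hNKapp]
      simp only [map_sub]
      abel
    have hstd := glue nabla B₁ B₂ ΦE hψ φ₁ h₁ φ₂ (by
      intro a b
      show NK (φ₂ a) (φ₂ b) = _
      exact hφ₂ a b)
    exact ⟨ZMod e × A₂, inferInstance, inferInstance, hstd⟩

/-- Every symplectic self-duality of a finite abelian group is standard. -/
theorem statement10 (L : Type) [AddCommGroup L] [Fintype L]
    (nabla : L ≃+ (L →+ QZ)) (hsymp : ∀ x : L, nabla x x = 0) :
    ∃ (A : Type) (iA : AddCommGroup A) (_ : @Finite A),
      @StandardPair A L iA _ nabla :=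
  main (Fintype.card L) L ‹_› ‹_› nabla hsymp le_rfl
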